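/- Let (z, z̄) be a primitive vanishing pair in H², i.e., z and z̄ are primitive elements of the degree-2 part H² of R_A with z·z̄ = 0 in R_A. Then there exist an index j ∈ {1,…,n}, a nonzero integer a, a sign ε ∈ {1,−1}, and an element u in the ℤ-span of x_1,…,x_{j−1} such that z = a x_j + u, z̄ = ε·(a(x_j − α_j) − u), and u·(u + a α_j) = 0 in R_A. -/

import Mathlib

/-!
Context: R_A := ℤ[x_1,…,x_n]/(x_j² − α_j x_j) with α_j = Σ_{i<j} A^i_j x_i.
The degree-2 part H² of R_A is the free abelian group with basis x_1,…,x_n;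
an element of H² is primitive if the gcd of its coordinates is 1.

STATEMENT 1: Let (z, z̄) be a primitive vanishing pair in H², i.e., z and z̄ are
primitive elements of H² with z·z̄ = 0 in R_A.  Then there exist an index j, a
nonzero integer a, a sign ε ∈ {1,−1}, and an element u in the ℤ-span of
x_1,…,x_{j−1} such that z = a x_j + u, z̄ = ε·(a(x_j − α_j) − u) and
u·(u + a α_j) = 0 in R_A.
-/

open MvPolynomial

noncomputable section

def alphaP (n : ℕ) (A : Fin n → Fin n → ℤ) (j : Fin n) : MvPolynomial (Fin n) ℤ :=
  ∑ i ∈ Finset.univ.filter (· < j), C (A i j) * X i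

def bottIdeal (n : ℕ) (A : Fin n → Fin n → ℤ) : Ideal (MvPolynomial (Fin n) ℤ) :=
  Ideal.span (Set.range fun j => X j ^ 2 - alphaP n A j * X j)

abbrev BottRing (n : ℕ) (A : Fin n → Fin n → ℤ) : Type :=
  MvPolynomial (Fin n) ℤ ⧸ bottIdeal n A

/-- The image x_i of X i in R_A. -/
def bx (n : ℕ) (A : Fin n → Fin n → ℤ) (i : Fin n) : BottRing n A :=
  Ideal.Quotient.mk (bottIdeal n A) (X i)

/-- The image of α_j in R_A. -/
def balpha (n : ℕ) (A : Fin n → Fin n → ℤ) (j : Fin n) : BottRing n A :=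
  Ideal.Quotient.mk (bottIdeal n A) (alphaP n A j)

/-! ### Auxiliary material -/

section Aux

set_option synthInstance.maxHeartbeats 1000000
set_option maxHeartbeats 1000000
set_option maxRecDepth 8000

abbrev Rr := DualNumber (DualNumber ℚ)

def sE : Rr := TrivSqZeroExt.inl (DualNumber.eps)
def tE : Rr := DualNumber.eps

lemma sE_mul_sE : sE * sE = 0 := by
  rw [sE, TrivSqZeroExt.inl_mul_inl, DualNumber.eps_mul_eps, TrivSqZeroExt.inl_zero]

lemma tE_mul_tE : tE * tE = 0 := by rw [tE, DualNumber.eps_mul_eps]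

open TrivSqZeroExt in
lemma smul_st_eq_zero (z : ℤ) (h : z • (sE * tE) = 0) : z = 0 := by
  have h2 := congrArg (fun x => TrivSqZeroExt.snd (TrivSqZeroExt.snd x)) h
  simp only [sE, tE, DualNumber.eps, snd_smul, snd_mul, snd_inl, fst_inl, snd_zero,
    smul_zero, zero_smul, add_zero, zero_add, smul_eq_mul, mul_one, mul_zero,
    fst_smul, snd_inr, fst_inr, MulOpposite.smul_eq_mul_unop] at h2
  rw [zsmul_eq_mul, mul_one] at h2
  exact_mod_cast h2

open TrivSqZeroExt in
lemma key_relation (n : ℕ) (A : Fin n → Fin n → ℤ) (c d : Fin n → ℤ)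
    (hvan : ((∑ i, c i • bx n A i) * (∑ i, d i • bx n A i)) = 0)
    (i j : Fin n) (hij : i < j) :
    c i * d j + c j * d i + A i j * (c j * d j) = 0 := by
  set q : ℚ := (A i j : ℚ) / 2 with hq
  set Q : Rr := algebraMap ℚ Rr q with hQdef
  set t' : Rr := tE + Q * sE with ht'
  have h2Q : 2 * Q = ((A i j : ℤ) : Rr) := by
    rw [show ((A i j : ℤ) : Rr) = algebraMap ℚ Rr ((A i j : ℚ)) from by simp]
    rw [hQdef, ← map_ofNat (algebraMap ℚ Rr) 2, ← map_mul, hq]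
    congr 1
    ring
  set f : Fin n → Rr := fun m => if m = i then sE else if m = j then t' else 0 with hf
  have hfi : f i = sE := by simp [hf]
  have hfj : f j = t' := by simp [hf, (ne_of_lt hij).symm]
  have hf0 : ∀ m, m ≠ i → m ≠ j → f m = 0 := by intro m h1 h2; simp [hf, h1, h2]
  -- the ideal is killed
  have hker : ∀ p ∈ bottIdeal n A, (aeval f) p = 0 := by
    intro p hp
    have : bottIdeal n A ≤ RingHom.ker (aeval f : MvPolynomial (Fin n) ℤ →ₐ[ℤ] Rr) := by
      rw [bottIdeal, Ideal.span_le]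
      rintro _ ⟨k, rfl⟩
      have halpha : ∀ l : Fin n, (aeval f) (alphaP n A l)
          = ∑ m ∈ Finset.univ.filter (· < l), ((A m l : ℤ) : Rr) * f m := by
        intro l
        simp [alphaP, map_sum, algebraMap_int_eq, eq_intCast]
      simp only [SetLike.mem_coe, RingHom.mem_ker, map_sub, map_mul, map_pow, aeval_X]
      rcases eq_or_ne k i with hk | hki
      · rw [hk]
        have h1 : (aeval f) (alphaP n A i) = 0 := by
          rw [halpha i]
          apply Finset.sum_eq_zero
          intro m hm
          rw [Finset.mem_filter] at hm
          rw [hf0 m (ne_of_lt hm.2) (ne_of_lt (lt_trans hm.2 hij)), mul_zero]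
        rw [h1, hfi, zero_mul, sub_zero, pow_two, sE_mul_sE]
      rcases eq_or_ne k j with hk | hkj
      · rw [hk]
        have h1 : (aeval f) (alphaP n A j) = ((A i j : ℤ) : Rr) * sE := by
          rw [halpha j, Finset.sum_eq_single_of_mem i
            (show i ∈ Finset.univ.filter (· < j) from
              Finset.mem_filter.mpr ⟨Finset.mem_univ i, hij⟩)
            (fun m hm hmi => by
              rw [hf0 m hmi (ne_of_lt (Finset.mem_filter.mp hm).2), mul_zero]), hfi]
        rw [h1, hfj, ht']
        linear_combination tE_mul_tE + (Q*Q - ((A i j : ℤ) : Rr)*Q) * sE_mul_sE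
          + (sE*tE)*h2Q
      · rw [hf0 k hki hkj]
        simp
    exact this hp
  -- hvan gives membership
  have hmem : ((∑ m, c m • X m) * (∑ m, d m • X m) : MvPolynomial (Fin n) ℤ)
      ∈ bottIdeal n A := by
    simp only [bx, ← map_zsmul (Ideal.Quotient.mk (bottIdeal n A)),
      ← map_sum, ← map_mul] at hvan
    exact Ideal.Quotient.eq_zero_iff_mem.mp hvan
  have hP := hker _ hmem
  have hsum : ∀ e : Fin n → ℤ,
      (aeval f) ((∑ m, e m • X m : MvPolynomial (Fin n) ℤ)) = e i • sE + e j • t' := by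
    intro e
    rw [map_sum (aeval f) (fun m => e m • X m) Finset.univ]
    simp only [map_zsmul, aeval_X]
    rw [← Finset.sum_subset (Finset.subset_univ {i, j})]
    · rw [Finset.sum_pair (ne_of_lt hij), hfi, hfj]
    · intro m _ hm
      simp only [Finset.mem_insert, Finset.mem_singleton, not_or] at hm
      rw [hf0 m hm.1 hm.2, smul_zero]
  rw [map_mul, hsum, hsum] at hP
  have hfinal : (c i * d j + c j * d i + A i j * (c j * d j)) • (sE * tE) = 0 := by
    rw [← hP]
    simp only [zsmul_eq_mul, ht']
    push_cast
    linear_combination (-((c i : Rr))*(d i : Rr) - (c i : Rr)*(d j : Rr)*Q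
        - (c j : Rr)*(d i : Rr)*Q - (c j : Rr)*(d j : Rr)*Q*Q) * sE_mul_sE
      - ((c j : Rr)*(d j : Rr))*tE_mul_tE - (sE*tE)*((c j : Rr)*(d j : Rr))*h2Q
  exact smul_st_eq_zero _ hfinal

lemma sum_split (n : ℕ) (A : Fin n → Fin n → ℤ) (j : Fin n) (e : Fin n → ℤ)
    (he : ∀ m, j < m → e m = 0) :
    ∑ m, e m • bx n A m
      = e j • bx n A j + ∑ m ∈ Finset.univ.filter (· < j), e m • bx n A m := by
  have h0 : ∑ m, e m • bx n A m
      = ∑ m ∈ insert j (Finset.univ.filter (· < j)), e m • bx n A m := by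
    symm
    apply Finset.sum_subset (Finset.subset_univ _)
    intro m _ hm
    simp only [Finset.mem_insert, Finset.mem_filter, Finset.mem_univ, true_and,
      not_or, not_lt] at hm
    rw [he m (lt_of_le_of_ne hm.2 (Ne.symm hm.1)), zero_smul]
  rw [h0, Finset.sum_insert (show j ∉ Finset.univ.filter (· < j) by simp)]

lemma balpha_eq (n : ℕ) (A : Fin n → Fin n → ℤ) (j : Fin n) :
    balpha n A j = ∑ m ∈ Finset.univ.filter (· < j), A m j • bx n A m := by
  rw [balpha, alphaP, map_sum]
  apply Finset.sum_congr rfl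
  intro m _
  rw [← MvPolynomial.smul_eq_C_mul, map_zsmul, bx]

lemma bx_sq (n : ℕ) (A : Fin n → Fin n → ℤ) (j : Fin n) :
    bx n A j * bx n A j = balpha n A j * bx n A j := by
  have h : (Ideal.Quotient.mk (bottIdeal n A)) (X j ^ 2 - alphaP n A j * X j) = 0 :=
    Ideal.Quotient.eq_zero_iff_mem.mpr (Ideal.subset_span ⟨j, rfl⟩)
  rw [map_sub, map_mul, map_pow, sub_eq_zero, pow_two] at h
  exact h

end Aux

set_option maxHeartbeats 1000000

theorem primitive_vanishing_pair (n : ℕ) (hn : 1 ≤ n) (A : Fin n → Fin n → ℤ)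
    (c d : Fin n → ℤ)
    (hc : Finset.univ.gcd c = 1) (hd : Finset.univ.gcd d = 1)
    (hvan : (∑ i, c i • bx n A i) * (∑ i, d i • bx n A i) = 0) :
    ∃ (j : Fin n) (a ε : ℤ) (u : Fin n → ℤ),
      a ≠ 0 ∧ (ε = 1 ∨ ε = -1) ∧ (∀ i, j ≤ i → u i = 0) ∧
      (∑ i, c i • bx n A i) = a • bx n A j + ∑ i, u i • bx n A i ∧
      (∑ i, d i • bx n A i)
        = ε • (a • (bx n A j - balpha n A j) - ∑ i, u i • bx n A i) ∧
      (∑ i, u i • bx n A i) * ((∑ i, u i • bx n A i) + a • balpha n A j) = 0 := by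
  classical
  -- choose j maximal with (c j, d j) ≠ (0,0)
  have hcex : ∃ m, c m ≠ 0 := by
    by_contra h
    push_neg at h
    have h0 : Finset.univ.gcd c = 0 :=
      Finset.gcd_eq_zero_iff.mpr (fun m _ => h m)
    rw [hc] at h0
    exact one_ne_zero h0
  obtain ⟨m0, hm0⟩ := hcex
  set T : Finset (Fin n) := Finset.univ.filter (fun m => c m ≠ 0 ∨ d m ≠ 0) with hT
  have hTne : T.Nonempty :=
    ⟨m0, Finset.mem_filter.mpr ⟨Finset.mem_univ m0, Or.inl hm0⟩⟩
  set j := T.max' hTne with hj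
  have hmax : ∀ m, j < m → c m = 0 ∧ d m = 0 := by
    intro m hm
    by_contra h
    rw [not_and_or, ← ne_eq, ← ne_eq] at h
    exact absurd (T.le_max' m (Finset.mem_filter.mpr ⟨Finset.mem_univ m, h⟩))
      (not_le.mpr hm)
  have hjT : c j ≠ 0 ∨ d j ≠ 0 := (Finset.mem_filter.mp (T.max'_mem hTne)).2
  have key : ∀ m, m < j → c m * d j + c j * d m + A m j * (c j * d j) = 0 :=
    fun m hm => key_relation n A c d hvan m j hm
  -- both c j and d j are nonzero
  have hdj : d j ≠ 0 := by
    intro hdj0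
    have hcj : c j ≠ 0 := hjT.resolve_right (by simp [hdj0])
    have hall : ∀ m, d m = 0 := by
      intro m
      rcases lt_trichotomy m j with h | h | h
      · have hk := key m h
        rw [hdj0] at hk
        have : c j * d m = 0 := by linarith
        exact (mul_eq_zero.mp this).resolve_left hcj
      · rw [h, hdj0]
      · exact (hmax m h).2
    have h0 : Finset.univ.gcd d = 0 :=
      Finset.gcd_eq_zero_iff.mpr (fun m _ => hall m)
    rw [hd] at h0
    exact one_ne_zero h0
  have hcj : c j ≠ 0 := by
    intro hcj0
    have hall : ∀ m, c m = 0 := by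
      intro m
      rcases lt_trichotomy m j with h | h | h
      · have hk := key m h
        rw [hcj0] at hk
        have : c m * d j = 0 := by linarith
        exact (mul_eq_zero.mp this).resolve_right hdj
      · rw [h, hcj0]
      · exact (hmax m h).1
    have h0 : Finset.univ.gcd c = 0 :=
      Finset.gcd_eq_zero_iff.mpr (fun m _ => hall m)
    rw [hc] at h0
    exact one_ne_zero h0
  -- gcd decomposition of (c j, d j)
  set gz : ℤ := (Int.gcd (c j) (d j) : ℤ) with hgz
  have hgz0 : gz ≠ 0 := by
    simp only [hgz, ne_eq, Int.natCast_eq_zero, Int.gcd_eq_zero_iff]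
    rintro ⟨h1, h2⟩; exact hcj h1
  set c' : ℤ := c j / gz with hc'def
  set d' : ℤ := d j / gz with hd'def
  have hcjg : c j = gz * c' := (Int.mul_ediv_cancel' (Int.gcd_dvd_left (c j) (d j))).symm
  have hdjg : d j = gz * d' := (Int.mul_ediv_cancel' (Int.gcd_dvd_right (c j) (d j))).symm
  have hcop : IsCoprime c' d' := by
    rw [Int.isCoprime_iff_gcd_eq_one]
    exact Int.gcd_div_gcd_div_gcd (Int.gcd_pos_of_ne_zero_left _ hcj)
  have keydiv : ∀ m, m < j → c m * d' + c' * d m + A m j * gz * (c' * d') = 0 := by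
    intro m hm
    have hk := key m hm
    rw [hcjg, hdjg] at hk
    have h2 : gz * (c m * d' + c' * d m + A m j * gz * (c' * d')) = 0 := by
      linear_combination hk
    exact (mul_eq_zero.mp h2).resolve_left hgz0
  -- c' and d' are units
  have hc'1 : c' = 1 ∨ c' = -1 := by
    have hdvd : ∀ m, c' ∣ c m := by
      intro m
      rcases lt_trichotomy m j with h | h | h
      · refine hcop.dvd_of_dvd_mul_right ⟨-(d m + A m j * gz * d'), ?_⟩
        linear_combination keydiv m h
      · exact ⟨gz, by rw [h, hcjg]; ring⟩
      · rw [(hmax m h).1]; exact dvd_zero _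
    have : c' ∣ 1 := hc ▸ Finset.dvd_gcd (fun m _ => hdvd m)
    exact Int.isUnit_iff.mp (isUnit_of_dvd_one this)
  have hd'1 : d' = 1 ∨ d' = -1 := by
    have hdvd : ∀ m, d' ∣ d m := by
      intro m
      rcases lt_trichotomy m j with h | h | h
      · refine (hcop.symm).dvd_of_dvd_mul_right ⟨-(c m + A m j * gz * c'), ?_⟩
        linear_combination keydiv m h
      · exact ⟨gz, by rw [h, hdjg]; ring⟩
      · rw [(hmax m h).2]; exact dvd_zero _
    have : d' ∣ 1 := hd ▸ Finset.dvd_gcd (fun m _ => hdvd m)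
    exact Int.isUnit_iff.mp (isUnit_of_dvd_one this)
  have hcc' : c' * c' = 1 := by rcases hc'1 with h | h <;> rw [h] <;> norm_num
  have hdd' : d' * d' = 1 := by rcases hd'1 with h | h <;> rw [h] <;> norm_num
  set ε : ℤ := c' * d' with hεdef
  have hεε : ε * ε = 1 := by
    rw [hεdef]
    linear_combination (d' * d') * hcc' + hdd'
  have hεcj : ε * c j = d j := by
    rw [hεdef, hcjg, hdjg]
    linear_combination (gz * d') * hcc'
  have hdm : ∀ m, m < j → d m = -(ε * (c j * A m j)) - ε * c m := by
    intro m hm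
    rw [hεdef, hcjg]
    linear_combination c' * (keydiv m hm) - d m * hcc'
  -- ring computations
  set Sf := Finset.univ.filter (· < j) with hSf
  set U : BottRing n A := ∑ m ∈ Sf, c m • bx n A m with hUdef
  set V : BottRing n A := ∑ m ∈ Sf, d m • bx n A m with hVdef
  set Xj := bx n A j with hXj
  set al := balpha n A j with hal
  have h1 : ∑ i, c i • bx n A i = c j • Xj + U :=
    sum_split n A j c (fun m hm => (hmax m hm).1)
  have h2 : ∑ i, d i • bx n A i = d j • Xj + V :=
    sum_split n A j d (fun m hm => (hmax m hm).2)
  have hsq : Xj * Xj = al * Xj := bx_sq n A j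
  have hW : ((c j * d j) • al + c j • V + d j • U) = 0 := by
    rw [hal, balpha_eq, hUdef, hVdef]
    rw [Finset.smul_sum, Finset.smul_sum, Finset.smul_sum,
      ← Finset.sum_add_distrib, ← Finset.sum_add_distrib]
    apply Finset.sum_eq_zero
    intro m hm
    have hk := key m (Finset.mem_filter.mp hm).2
    rw [smul_smul, smul_smul, smul_smul, ← add_smul, ← add_smul,
      show c j * d j * A m j + c j * d m + d j * c m = 0 from by linarith, zero_smul]
  have hvan' : (c j • Xj + U) * (d j • Xj + V) = 0 := by rw [← h1, ← h2]; exact hvan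
  have huv : U * V = 0 := by
    have h3 : ((c j * d j) • al + c j • V + d j • U) * Xj + U * V = 0 := by
      rw [← hvan']
      simp only [zsmul_eq_mul]
      push_cast
      linear_combination (-(c j : BottRing n A) * (d j : BottRing n A)) * hsq
    rw [hW, zero_mul, zero_add] at h3
    exact h3
  -- assemble
  set u : Fin n → ℤ := fun m => if m < j then c m else 0 with hu
  have hU' : ∑ m, u m • bx n A m = U := by
    rw [hUdef, hSf, Finset.sum_filter]
    apply Finset.sum_congr rfl
    intro m _
    by_cases h : m < j <;> simp [hu, h]
  refine ⟨j, c j, ε, u, hcj, ?_, ?_, ?_, ?_, ?_⟩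
  · rcases hc'1 with h | h <;> rcases hd'1 with h' | h' <;>
      simp [hεdef, h, h']
  · intro i hi
    simp [hu, not_lt.mpr hi]
  · rw [h1, hU']
  · rw [h2, hU']
    have hVeq : V = ∑ m ∈ Sf, (-(ε * (c j * A m j)) - ε * c m) • bx n A m := by
      rw [hVdef]
      apply Finset.sum_congr rfl
      intro m hm
      rw [hdm m (Finset.mem_filter.mp hm).2]
    rw [hVeq, balpha_eq, hUdef, hXj]
    simp only [smul_sub, smul_smul, Finset.smul_sum]
    rw [hεcj, sub_sub, ← Finset.sum_add_distrib, sub_eq_add_neg,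
      ← Finset.sum_neg_distrib]
    congr 1
    apply Finset.sum_congr rfl
    intro m hm
    rw [← add_smul, ← neg_smul]
    congr 1
    ring
  · rw [hU']
    have hUal : U + c j • al = (-ε) • V := by
      rw [hVdef, hal, balpha_eq, hUdef, Finset.smul_sum, Finset.smul_sum,
        ← Finset.sum_add_distrib]
      apply Finset.sum_congr rfl
      intro m hm
      have hdmm := hdm m (Finset.mem_filter.mp hm).2
      rw [smul_smul, smul_smul, ← add_smul]
      congr 1
      rw [hdmm]
      linear_combination (-(c j * A m j + c m)) * hεε
    rw [hUal, mul_smul_comm, huv, smul_zero]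

end
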